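/- In AMBR with total budget T, candidates N = max(|H|,|R|), and per-iteration reference budget t_i = min(max(⌊T / (|H_i| · ⌈log₂ N⌉)⌋, 1), n) where |H_i| = ⌈N/2^i⌉ and n = |R|, the total number of utility evaluations performed, Σ_{i=0}^{⌈log₂ N⌉ - 1} |H_i| · (t_i − t_{i-1})⁺ counted with t_{-1}=0 and using that each iteration only evaluates new references against current candidates plus old references against surviving candidates, satisfies: each iteration i evaluates at most |H_i| · t_i pairs, hence the total is at most Σ_i |H_i| · t_i ≤ Σ_i |H_i| · max(⌊T/(|H_i|⌈log₂ N⌉)⌋, 1) ≤ T + Σ_i |H_i|. -/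
import Mathlib


/-- Budget bound for AMBR: the total number of utility evaluations is at most
`Σ_i |H_i|·t_i ≤ Σ_i |H_i|·max(⌊T/(|H_i|⌈log₂ N⌉)⌋, 1) ≤ T + Σ_i |H_i|`. -/
theorem stmt_4 (T N n : ℕ) (hN : 1 ≤ N)
    (K : ℕ) (hK : K = Nat.clog 2 N)
    (Hsize : ℕ → ℕ) (hHsize : ∀ i, Hsize i = N ⌈/⌉ 2 ^ i)
    (t : ℕ → ℕ) (ht : ∀ i, t i = min (max (T / (Hsize i * K)) 1) n) :
    (∑ i ∈ Finset.range K,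
        Hsize i * (t i - (if i = 0 then 0 else t (i - 1)))) ≤
      ∑ i ∈ Finset.range K, Hsize i * t i ∧
    (∑ i ∈ Finset.range K, Hsize i * t i) ≤
      ∑ i ∈ Finset.range K, Hsize i * max (T / (Hsize i * K)) 1 ∧
    (∑ i ∈ Finset.range K, Hsize i * max (T / (Hsize i * K)) 1) ≤
      T + ∑ i ∈ Finset.range K, Hsize i := by
  refine ⟨?_, ?_, ?_⟩
  · exact Finset.sum_le_sum fun i _ =>
      Nat.mul_le_mul_left _ (Nat.sub_le _ _)
  · refine Finset.sum_le_sum fun i _ => Nat.mul_le_mul_left _ ?_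
    rw [ht i]; exact min_le_left _ _
  · have h1 : ∀ i, Hsize i * max (T / (Hsize i * K)) 1 ≤
        Hsize i * (T / (Hsize i * K)) + Hsize i := by
      intro i
      calc Hsize i * max (T / (Hsize i * K)) 1
          ≤ Hsize i * (T / (Hsize i * K) + 1) :=
            Nat.mul_le_mul_left _ (max_le (Nat.le_succ _) (Nat.succ_le_succ (Nat.zero_le _)))
        _ = Hsize i * (T / (Hsize i * K)) + Hsize i := by ring
    have h2 : ∀ i, Hsize i * (T / (Hsize i * K)) ≤ T / K := by
      intro i
      have : T / (Hsize i * K) = T / K / Hsize i := by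
        rw [Nat.div_div_eq_div_mul, Nat.mul_comm]
      rw [this]
      exact Nat.mul_div_le _ _
    calc ∑ i ∈ Finset.range K, Hsize i * max (T / (Hsize i * K)) 1
        ≤ ∑ i ∈ Finset.range K, (T / K + Hsize i) :=
          Finset.sum_le_sum fun i _ => le_trans (h1 i) (Nat.add_le_add_right (h2 i) _)
      _ = K * (T / K) + ∑ i ∈ Finset.range K, Hsize i := by
          rw [Finset.sum_add_distrib, Finset.sum_const, Finset.card_range, smul_eq_mul]
      _ ≤ T + ∑ i ∈ Finset.range K, Hsize i :=
          Nat.add_le_add_right (Nat.mul_div_le _ _) _
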